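/- arXiv:2002.11230 — 2 statements merged into one kernel-verified Lean document; each statement's English description precedes it below -/
import Mathlib

section
/- Let Γ be a group, K a Γ-graded division ring with support Γ_K, γ₁,…,γₙ ∈ Γ, and R = Mₙ(K)(γ₁,…,γₙ). Then R is strongly graded if and only if the set of left cosets {γ₁Γ_K, …, γₙΓ_K} equals Γ/Γ_K, i.e., every left coset of Γ_K in Γ is of the form γᵢΓ_K for some i ∈ {1,…,n}. -/
open Pointwise

structure RingGrading (Γ : Type) [Group Γ] (R : Type) [Ring R] where
  component : Γ → AddSubgroup R
  one_mem : (1 : R) ∈ component 1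
  mul_mem : ∀ {γ δ : Γ} {a b : R}, a ∈ component γ → b ∈ component δ →
    a * b ∈ component (γ * δ)
  iSup_eq_top : (⨆ γ : Γ, component γ) = ⊤
  independent : iSupIndep component

variable {Γ : Type} [Group Γ] {R : Type} [Ring R]

def matrixComponent (g : RingGrading Γ R) (n : ℕ) (γv : Fin n → Γ) (δ : Γ) :
    AddSubgroup (Matrix (Fin n) (Fin n) R) where
  carrier := {M | ∀ i j, M i j ∈ g.component ((γv i)⁻¹ * δ * γv j)}
  add_mem' := by
    intro a b ha hb i j
    simpa [Matrix.add_apply] using add_mem (ha i j) (hb i j)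
  zero_mem' := by
    intro i j
    simpa using zero_mem (g.component ((γv i)⁻¹ * δ * γv j))
  neg_mem' := by
    intro a ha i j
    simpa [Matrix.neg_apply] using neg_mem (ha i j)

/-- A `Γ`-graded ring (given by its components) is strongly graded if
`R_γ R_δ = R_{γδ}` for all `γ, δ`; since the inclusion `R_γ R_δ ⊆ R_{γδ}` always
holds in a graded ring, this is the nontrivial inclusion. -/
def StronglyGraded {S : Type} [Ring S] (c : Γ → AddSubgroup S) : Prop :=
  ∀ γ δ : Γ, c (γ * δ) ≤ AddSubgroup.closure ((c γ : Set S) * (c δ : Set S))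

/-- A unital graded ring is a crossed product if every component contains an invertible
element. -/
def IsCrossedProduct {S : Type} [Ring S] (c : Γ → AddSubgroup S) : Prop :=
  ∀ γ : Γ, ∃ u : Sˣ, (u : S) ∈ c γ

/-- Graded unit-regular: every `a ∈ R_γ` satisfies `a = a u a` for some unit `u ∈ R_{γ⁻¹}`. -/
def GradedUnitRegular {S : Type} [Ring S] (c : Γ → AddSubgroup S) : Prop :=
  ∀ (γ : Γ) (a : S), a ∈ c γ → ∃ u : Sˣ, (u : S) ∈ c γ⁻¹ ∧ a = a * u * a

/-- A `Γ`-graded division ring: a graded ring in which every nonzero homogeneous element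
is invertible. -/
structure GradedDivRing (Γ : Type) [Group Γ] (K : Type) [Ring K] extends
    RingGrading Γ K where
  isUnit_of_homogeneous : ∀ {γ : Γ} {a : K}, a ∈ component γ → a ≠ 0 → IsUnit a

/-- The support `Γ_R = {γ | R_γ ≠ 0}` of a grading. -/
def RingGrading.support (g : RingGrading Γ R) : Set Γ := {γ : Γ | g.component γ ≠ ⊥}

def IsGradedIso {Γ R S : Type} [AddGroup R] [Mul R] [AddGroup S] [Mul S]
    (cR : Γ → AddSubgroup R) (cS : Γ → AddSubgroup S) : Prop :=
  ∃ e : R ≃+* S, ∀ (γ : Γ) (x : R), x ∈ cR γ ↔ e x ∈ cS γ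

/-- The identity component `R_ε` of the graded matrix ring, as a subring. -/
def matrixIdentitySubring (g : RingGrading Γ R) (n : ℕ) (γv : Fin n → Γ) :
    Subring (Matrix (Fin n) (Fin n) R) where
  carrier := matrixComponent g n γv 1
  add_mem' := add_mem
  zero_mem' := zero_mem _
  neg_mem' := neg_mem
  one_mem' := by
    intro i j
    by_cases h : i = j
    · subst h
      rw [Matrix.one_apply_eq]
      have hh : (γv i)⁻¹ * 1 * γv i = 1 := by group
      rw [hh]; exact g.one_mem
    · rw [Matrix.one_apply_ne h]
      exact zero_mem _
  mul_mem' := by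
    intro a b ha hb i j
    show (a * b) i j ∈ _
    rw [Matrix.mul_apply]
    refine AddSubgroup.sum_mem _ fun k _ => ?_
    have h := g.mul_mem (ha i k) (hb k j)
    have hh : (γv i)⁻¹ * 1 * γv k * ((γv k)⁻¹ * 1 * γv j) = (γv i)⁻¹ * 1 * γv j := by group
    rwa [hh] at h

/-- The degree-`γ` component `A·γ` of the group ring `A[Γ]`. -/
def monoidAlgebraComponent (A : Type) [Ring A] (Γ : Type) [Group Γ] (γ : Γ) :
    AddSubgroup (MonoidAlgebra A Γ) where
  carrier := {f | ∀ δ : Γ, δ ≠ γ → f.coeff δ = 0}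
  add_mem' := by
    intro f h hf hh δ hδ
    show (f.coeff + h.coeff) δ = 0
    rw [Finsupp.add_apply, hf δ hδ, hh δ hδ, add_zero]
  zero_mem' := fun δ _ => rfl
  neg_mem' := by
    intro f hf δ hδ
    show (-f.coeff) δ = 0
    rw [Finsupp.neg_apply, hf δ hδ, neg_zero]

section Aux

variable {Γ : Type} [Group Γ] {K : Type} [Ring K]

lemma RingGrading.decompose (g : RingGrading Γ K) (x : K) :
    ∃ (s : Finset Γ) (f : Γ → K), (∀ δ, f δ ∈ g.component δ) ∧ (∀ δ ∉ s, f δ = 0) ∧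
      x = ∑ δ ∈ s, f δ := by
  classical
  have hx : x ∈ ⨆ γ, g.component γ := by rw [g.iSup_eq_top]; trivial
  refine AddSubgroup.iSup_induction (C := fun x => ∃ (s : Finset Γ) (f : Γ → K),
      (∀ δ, f δ ∈ g.component δ) ∧ (∀ δ ∉ s, f δ = 0) ∧ x = ∑ δ ∈ s, f δ)
    g.component hx ?_ ?_ ?_
  · intro γ a ha
    refine ⟨{γ}, fun δ => if δ = γ then a else 0, ?_, ?_, ?_⟩
    · intro δ
      by_cases h : δ = γ
      · subst h; simpa using ha
      · simp only [if_neg h]; exact zero_mem _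
    · intro δ hδ; simp at hδ; simp [hδ]
    · simp
  · exact ⟨∅, fun _ => 0, fun δ => zero_mem _, fun _ _ => rfl, by simp⟩
  · rintro x y ⟨s, f, hf, hf0, rfl⟩ ⟨t, h, hh, hh0, rfl⟩
    refine ⟨s ∪ t, fun δ => f δ + h δ, fun δ => add_mem (hf δ) (hh δ), ?_, ?_⟩
    · intro δ hδ
      rw [Finset.mem_union] at hδ; push_neg at hδ
      show f δ + h δ = 0
      rw [hf0 _ hδ.1, hh0 _ hδ.2, add_zero]
    · rw [Finset.sum_add_distrib]
      congr 1
      · exact Finset.sum_subset Finset.subset_union_left (fun δ _ hδ => hf0 δ hδ)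
      · exact Finset.sum_subset Finset.subset_union_right (fun δ _ hδ => hh0 δ hδ)

lemma GradedDivRing.exists_inv [Nontrivial K] (g : GradedDivRing Γ K) {γ : Γ} {a : K}
    (ha : a ∈ g.component γ) (ha0 : a ≠ 0) :
    ∃ b ∈ g.component γ⁻¹, a * b = 1 ∧ b * a = 1 := by
  classical
  obtain ⟨u, hu⟩ := g.isUnit_of_homogeneous ha ha0
  obtain ⟨s, f, hf, hf0, hsum⟩ := g.toRingGrading.decompose (↑u⁻¹ : K)
  have key : a * (↑u⁻¹ : K) = 1 := by rw [← hu]; exact u.mul_inv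
  have h1 : (1 : K) = ∑ δ ∈ insert γ⁻¹ s, a * f δ := by
    by_cases hmem : γ⁻¹ ∈ s
    · rw [Finset.insert_eq_self.mpr hmem, ← Finset.mul_sum, ← hsum, key]
    · rw [Finset.sum_insert hmem, hf0 _ hmem, mul_zero, zero_add, ← Finset.mul_sum, ← hsum, key]
  have hc1 : a * f γ⁻¹ ∈ g.component 1 := by
    have := g.mul_mem ha (hf γ⁻¹)
    rwa [mul_inv_cancel] at this
  have hsub : (1 : K) - a * f γ⁻¹ = ∑ δ ∈ (insert γ⁻¹ s).erase γ⁻¹, a * f δ := by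
    rw [sub_eq_iff_eq_add, h1,
      ← Finset.sum_erase_add (insert γ⁻¹ s) _ (Finset.mem_insert_self γ⁻¹ s)]
  have hmem2 : (1 : K) - a * f γ⁻¹ ∈ ⨆ (δ : Γ) (_ : δ ≠ 1), g.component δ := by
    rw [hsub]
    refine AddSubgroup.sum_mem _ fun δ hδ => ?_
    have hδne : δ ≠ γ⁻¹ := (Finset.mem_erase.mp hδ).1
    have hne : γ * δ ≠ 1 := fun h => hδne (inv_eq_of_mul_eq_one_right h).symm
    exact le_iSup₂ (f := fun (δ : Γ) (_ : δ ≠ (1:Γ)) => g.component δ) (γ * δ) hne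
      (g.mul_mem ha (hf δ))
  have hzero : (1 : K) - a * f γ⁻¹ = 0 :=
    AddSubgroup.disjoint_def.mp (g.independent 1) (sub_mem g.one_mem hc1) hmem2
  have hab : a * f γ⁻¹ = 1 := (sub_eq_zero.mp hzero).symm
  have hb0 : f γ⁻¹ ≠ 0 := by
    intro h; rw [h, mul_zero] at hab; exact one_ne_zero hab.symm
  obtain ⟨v, hv⟩ := g.isUnit_of_homogeneous (hf γ⁻¹) hb0
  have hva : (↑v⁻¹ : K) = a := Units.inv_eq_of_mul_eq_one_left (by rw [hv]; exact hab)
  refine ⟨f γ⁻¹, hf γ⁻¹, hab, ?_⟩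
  rw [← hv, ← hva]; exact v.mul_inv

lemma RingGrading.mem_support_of [Nontrivial K] (g : RingGrading Γ K) {σ : Γ} {a : K}
    (ha : a ∈ g.component σ) (ha0 : a ≠ 0) : σ ∈ g.support := by
  intro hbot
  rw [hbot, AddSubgroup.mem_bot] at ha
  exact ha0 ha

lemma GradedDivRing.support_inv [Nontrivial K] (g : GradedDivRing Γ K) {σ : Γ}
    (h : σ ∈ g.toRingGrading.support) : σ⁻¹ ∈ g.toRingGrading.support := by
  obtain ⟨a, ha, ha0⟩ : ∃ a ∈ g.component σ, a ≠ 0 := by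
    by_contra hc
    push_neg at hc
    refine h ?_
    ext x
    simp only [AddSubgroup.mem_bot]
    exact ⟨fun hx => hc x hx, fun hx => hx ▸ zero_mem _⟩
  obtain ⟨b, hb, hab, hba⟩ := g.exists_inv ha ha0
  exact g.toRingGrading.mem_support_of hb (by intro h0; rw [h0, zero_mul] at hba; exact one_ne_zero hba.symm)

end Aux

/-- For a `Γ`-graded division ring `K` with support `Γ_K` and
`R = Mₙ(K)(γ₁, …, γₙ)`, the ring `R` is strongly graded iff every left coset of `Γ_K`
equals `γᵢΓ_K` for some `i` (note `δΓ_K = γᵢΓ_K ↔ γᵢ⁻¹δ ∈ Γ_K`). -/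
theorem matrix_stronglyGraded_iff_cosets {Γ : Type} [Group Γ] {K : Type} [Ring K]
    [Nontrivial K] (g : GradedDivRing Γ K) {n : ℕ} (hn : 0 < n) (γv : Fin n → Γ) :
    StronglyGraded (matrixComponent g.toRingGrading n γv) ↔
      ∀ δ : Γ, ∃ i : Fin n, (γv i)⁻¹ * δ ∈ g.toRingGrading.support := by

  constructor
  · -- strongly graded → cosets cover
    intro hsg δ
    set i₀ : Fin n := ⟨0, hn⟩ with hi₀
    set σ : Γ := γv i₀ * δ⁻¹ with hσ
    have hone : (1 : Matrix (Fin n) (Fin n) K) ∈ matrixComponent g.toRingGrading n γv 1 :=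
      (matrixIdentitySubring g.toRingGrading n γv).one_mem'
    have hone' : (1 : Matrix (Fin n) (Fin n) K) ∈
        matrixComponent g.toRingGrading n γv (σ * σ⁻¹) := by
      rwa [mul_inv_cancel]
    have hcl := hsg σ σ⁻¹ hone'
    have key : ∀ x ∈ AddSubgroup.closure
        ((matrixComponent g.toRingGrading n γv σ : Set (Matrix (Fin n) (Fin n) K)) *
          (matrixComponent g.toRingGrading n γv σ⁻¹ : Set (Matrix (Fin n) (Fin n) K))),
        x i₀ i₀ ≠ 0 → ∃ i : Fin n, (γv i)⁻¹ * δ ∈ g.toRingGrading.support := by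
      intro x hx
      induction hx using AddSubgroup.closure_induction with
      | mem x hx =>
        intro hx0
        obtain ⟨A, hA, B, hB, rfl⟩ := hx
        change (A * B) i₀ i₀ ≠ 0 at hx0
        rw [Matrix.mul_apply] at hx0
        obtain ⟨k, _, hk⟩ := Finset.exists_ne_zero_of_sum_ne_zero hx0
        have hAk : A i₀ k ≠ 0 := fun h => hk (by rw [h, zero_mul])
        have hmem : A i₀ k ∈ g.component ((γv i₀)⁻¹ * σ * γv k) := hA i₀ k
        have heq : (γv i₀)⁻¹ * σ * γv k = δ⁻¹ * γv k := by rw [hσ]; group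
        rw [heq] at hmem
        have hsup := g.toRingGrading.mem_support_of hmem hAk
        have := g.support_inv hsup
        refine ⟨k, ?_⟩
        have heq2 : (δ⁻¹ * γv k)⁻¹ = (γv k)⁻¹ * δ := by group
        rwa [heq2] at this
      | zero => intro h; exact absurd rfl h
      | add x y hx hy ihx ihy =>
        intro hxy
        rcases ne_or_eq (x i₀ i₀) 0 with h | h
        · exact ihx h
        · refine ihy fun h' => hxy ?_
          show (x + y) i₀ i₀ = 0
          rw [Matrix.add_apply, h, h', add_zero]
      | neg x hx ihx =>
        intro hx0
        refine ihx fun h => hx0 ?_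
        show (-x) i₀ i₀ = 0
        rw [Matrix.neg_apply, h, neg_zero]
    refine key 1 hcl ?_
    rw [Matrix.one_apply_eq]
    exact one_ne_zero
  · -- cosets cover → strongly graded
    intro hco γ δ M hM
    rw [Matrix.matrix_eq_sum_single M]
    refine AddSubgroup.sum_mem _ fun i _ => AddSubgroup.sum_mem _ fun j _ => ?_
    -- find k with (γv i)⁻¹ * γ * γv k ∈ support
    obtain ⟨k, hk⟩ := hco (γ⁻¹ * γv i)
    have hk' : (γv i)⁻¹ * γ * γv k ∈ g.toRingGrading.support := by
      have := g.support_inv hk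
      have heq : ((γv k)⁻¹ * (γ⁻¹ * γv i))⁻¹ = (γv i)⁻¹ * γ * γv k := by group
      rwa [heq] at this
    obtain ⟨a, ha, ha0⟩ : ∃ a ∈ g.component ((γv i)⁻¹ * γ * γv k), a ≠ 0 := by
      by_contra hc
      push_neg at hc
      refine hk' ?_
      ext x
      simp only [AddSubgroup.mem_bot]
      exact ⟨fun hx => hc x hx, fun hx => hx ▸ zero_mem _⟩
    obtain ⟨b, hb, hab, hba⟩ := g.exists_inv ha ha0
    set y : K := b * M i j with hy
    have hx : M i j ∈ g.component ((γv i)⁻¹ * (γ * δ) * γv j) := hM i j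
    have hymem : y ∈ g.component ((γv k)⁻¹ * δ * γv j) := by
      have := g.mul_mem hb hx
      have heq : ((γv i)⁻¹ * γ * γv k)⁻¹ * ((γv i)⁻¹ * (γ * δ) * γv j)
          = (γv k)⁻¹ * δ * γv j := by group
      rwa [heq] at this
    have hAmem : Matrix.single i k a ∈ matrixComponent g.toRingGrading n γv γ := by
      intro i' j'
      by_cases h1 : i = i' ∧ k = j'
      · obtain ⟨rfl, rfl⟩ := h1
        rw [Matrix.single_apply_same]
        exact ha
      · rw [Matrix.single, Matrix.of_apply, if_neg h1]
        exact zero_mem _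
    have hBmem : Matrix.single k j y ∈ matrixComponent g.toRingGrading n γv δ := by
      intro i' j'
      by_cases h1 : k = i' ∧ j = j'
      · obtain ⟨rfl, rfl⟩ := h1
        rw [Matrix.single_apply_same]
        exact hymem
      · rw [Matrix.single, Matrix.of_apply, if_neg h1]
        exact zero_mem _
    have hprod : Matrix.single i k a * Matrix.single k j y
        = Matrix.single i j (M i j) := by
      rw [Matrix.single_mul_single_same, hy, ← mul_assoc, hab, one_mul]
    rw [← hprod]
    exact AddSubgroup.subset_closure (Set.mul_mem_mul hAmem hBmem)
end

section
/- Let K be a field, m and n positive integers, and γ₁,…,γₙ integers. For each j ∈ {0,…,m−1} let k_j be the number of indices i with γᵢ ≡ j (mod m). Then the ℤ-graded ring R = Mₙ(K[x^m, x^{−m}])(γ₁,…,γₙ) is a crossed product if and only if k₀, k₁, …, k_{m−1} are all positive and equal to each other; and in that case R is a skew group ring. -/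
open Pointwise

noncomputable section

def matrixComponentZ {R : Type} [Ring R] (c : ℤ → AddSubgroup R) (n : ℕ)
    (γv : Fin n → ℤ) (δ : ℤ) : AddSubgroup (Matrix (Fin n) (Fin n) R) where
  carrier := {M | ∀ i j, M i j ∈ c (-(γv i) + δ + γv j)}
  add_mem' := by
    intro a b ha hb i j
    simpa [Matrix.add_apply] using add_mem (ha i j) (hb i j)
  zero_mem' := by
    intro i j
    simpa using zero_mem (c (-(γv i) + δ + γv j))
  neg_mem' := by
    intro a ha i j
    simpa [Matrix.neg_apply] using neg_mem (ha i j)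

/-- The graded field `K[x^m, x^{-m}]`, realized as the Laurent polynomial ring
`AddMonoidAlgebra K ℤ` in which the basis element `single k` stands for `x^{m k}`.
Its degree-`d` component is `K·x^d` if `m ∣ d` (i.e. `d = m k`) and `0` otherwise. -/
def laurentComponent (K : Type) [Field K] (m : ℕ) (d : ℤ) :
    AddSubgroup (AddMonoidAlgebra K ℤ) where
  carrier := {f | ∀ k : ℤ, (m : ℤ) * k ≠ d → f.coeff k = 0}
  add_mem' := by
    intro f h hf hh k hk
    show (f + h).coeff k = 0
    rw [AddMonoidAlgebra.coeff_add, Finsupp.add_apply, hf k hk, hh k hk, add_zero]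
  zero_mem' := fun k _ => rfl
  neg_mem' := by
    intro f hf k hk
    show (-f).coeff k = 0
    rw [AddMonoidAlgebra.coeff_neg, Finsupp.neg_apply, hf k hk, neg_zero]

theorem laurentComponent_mul {K : Type} [Field K] {m : ℕ} {a b : ℤ}
    {f g : AddMonoidAlgebra K ℤ} (hf : f ∈ laurentComponent K m a)
    (hg : g ∈ laurentComponent K m b) : f * g ∈ laurentComponent K m (a + b) := by
  intro k hk
  by_contra hne
  have hks : k ∈ (f * g).coeff.support := Finsupp.mem_support_iff.mpr hne
  have hmem := AddMonoidAlgebra.support_coeff_mul_subset f g hks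
  rw [Finset.mem_add] at hmem
  obtain ⟨k₁, hk₁, k₂, hk₂, hsum⟩ := hmem
  have h1 : (m : ℤ) * k₁ = a := by
    by_contra h
    exact (Finsupp.mem_support_iff.mp hk₁) (hf k₁ h)
  have h2 : (m : ℤ) * k₂ = b := by
    by_contra h
    exact (Finsupp.mem_support_iff.mp hk₂) (hg k₂ h)
  exact hk (by rw [← hsum, mul_add, h1, h2])

def StronglyGradedZ {S : Type} [Ring S] (c : ℤ → AddSubgroup S) : Prop :=
  ∀ a b : ℤ, c (a + b) ≤ AddSubgroup.closure ((c a : Set S) * (c b : Set S))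

def IsCrossedProductZ {S : Type} [Ring S] (c : ℤ → AddSubgroup S) : Prop :=
  ∀ d : ℤ, ∃ u : Sˣ, (u : S) ∈ c d

def IsSkewGroupRingZ {S : Type} [Ring S] (c : ℤ → AddSubgroup S) : Prop :=
  ∃ σ : ℤ → Sˣ, (∀ a b : ℤ, σ (a + b) = σ a * σ b) ∧ ∀ d : ℤ, ((σ d : Sˣ) : S) ∈ c d

/-- The degree-zero component of `Mₙ(K[x^m, x^{-m}])(γ₁, …, γₙ)`, as a subring. -/
def laurentMatrixZeroSubring (K : Type) [Field K] (m n : ℕ) (γv : Fin n → ℤ) :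
    Subring (Matrix (Fin n) (Fin n) (AddMonoidAlgebra K ℤ)) where
  carrier := matrixComponentZ (laurentComponent K m) n γv 0
  add_mem' := add_mem
  zero_mem' := zero_mem _
  neg_mem' := neg_mem
  one_mem' := by
    intro i j
    by_cases h : i = j
    · subst h
      rw [Matrix.one_apply_eq]
      have hh : -(γv i) + 0 + γv i = 0 := by ring
      rw [hh]
      intro k hk
      have hk0 : k ≠ 0 := by
        intro h0; exact hk (by rw [h0, mul_zero])
      show ((AddMonoidAlgebra.single (0 : ℤ) (1 : K))).coeff k = 0
      exact Finsupp.single_eq_of_ne' (Ne.symm hk0)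
    · rw [Matrix.one_apply_ne h]
      exact zero_mem _
  mul_mem' := by
    intro a b ha hb i j
    show (a * b) i j ∈ _
    rw [Matrix.mul_apply]
    refine AddSubgroup.sum_mem _ fun k _ => ?_
    have h := laurentComponent_mul (ha i k) (hb k j)
    have hh : -(γv i) + 0 + γv k + (-(γv k) + 0 + γv j) = -(γv i) + 0 + γv j := by ring
    rwa [hh] at h

/-- The degree-`d` component `A·d` of the group ring `A[ℤ]`. -/
def addMonoidAlgebraComponentZ (A : Type) [Ring A] (d : ℤ) :
    AddSubgroup (AddMonoidAlgebra A ℤ) where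
  carrier := {f | ∀ k : ℤ, k ≠ d → f.coeff k = 0}
  add_mem' := by
    intro f h hf hh k hk
    show (f + h).coeff k = 0
    rw [AddMonoidAlgebra.coeff_add, Finsupp.add_apply, hf k hk, hh k hk, add_zero]
  zero_mem' := fun k _ => rfl
  neg_mem' := by
    intro f hf k hk
    show (-f).coeff k = 0
    rw [AddMonoidAlgebra.coeff_neg, Finsupp.neg_apply, hf k hk, neg_zero]

section AuxLemmas

variable {K : Type} [Field K] {m n : ℕ}

lemma laurent_eq_zero {d : ℤ} {f : AddMonoidAlgebra K ℤ}
    (hf : f ∈ laurentComponent K m d) (hd : ¬ (m:ℤ) ∣ d) : f = 0 := by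
  ext k
  exact hf k fun h => hd ⟨k, h.symm⟩

lemma single_mem_laurent {d k : ℤ} (hk : (m:ℤ) * k = d) (c : K) :
    AddMonoidAlgebra.single k c ∈ laurentComponent K m d := by
  intro k' hk'
  refine Finsupp.single_eq_of_ne' fun h => hk' ?_
  rw [← h]; exact hk

lemma matrixComp_mul {γv : Fin n → ℤ} {a b : Matrix (Fin n) (Fin n) (AddMonoidAlgebra K ℤ)}
    {da db : ℤ}
    (ha : a ∈ matrixComponentZ (laurentComponent K m) n γv da)
    (hb : b ∈ matrixComponentZ (laurentComponent K m) n γv db) :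
    a * b ∈ matrixComponentZ (laurentComponent K m) n γv (da + db) := by
  intro i j
  show (a * b) i j ∈ _
  rw [Matrix.mul_apply]
  refine AddSubgroup.sum_mem _ fun k _ => ?_
  have h := laurentComponent_mul (ha i k) (hb k j)
  have hh : -(γv i) + da + γv k + (-(γv k) + db + γv j) = -(γv i) + (da + db) + γv j := by ring
  rwa [hh] at h

lemma matrixComp_one (γv : Fin n → ℤ) :
    (1 : Matrix (Fin n) (Fin n) (AddMonoidAlgebra K ℤ)) ∈
      matrixComponentZ (laurentComponent K m) n γv 0 :=
  one_mem (laurentMatrixZeroSubring K m n γv)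

end AuxLemmas
section AuxCard

variable {K : Type} [Field K] {m n : ℕ}

lemma card_le_of_unit
    (u : (Matrix (Fin n) (Fin n) (AddMonoidAlgebra K ℤ))ˣ)
    (S T : Set (Fin n))
    (hST : ∀ i ∈ S, ∀ j, j ∉ T → (u : Matrix (Fin n) (Fin n) (AddMonoidAlgebra K ℤ)) i j = 0) :
    S.ncard ≤ T.ncard := by
  classical
  haveI : Fintype ↥S := Fintype.ofFinite ↥S
  haveI : Fintype ↥T := Fintype.ofFinite ↥T
  set A := AddMonoidAlgebra K ℤ
  set M : Matrix (Fin n) (Fin n) A := (u : Matrix (Fin n) (Fin n) A) with hM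
  set v : ↥S → (↥T → A) := fun i j => M i j with hv
  have hli : LinearIndependent A v := by
    rw [Fintype.linearIndependent_iff]
    intro g hsum
    set c : Fin n → A := fun i => if h : i ∈ S then g ⟨i, h⟩ else 0 with hc
    have hvm : Matrix.vecMul c M = 0 := by
      funext j
      show ∑ i : Fin n, c i * M i j = 0
      by_cases hj : j ∈ T
      · have h1 : ∑ i ∈ S.toFinset, c i * M i j = ∑ i : Fin n, c i * M i j := by
          refine Finset.sum_subset (Finset.subset_univ _) fun x _ hx => ?_
          rw [Set.mem_toFinset] at hx
          simp [hc, hx]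
        have h2 : ∑ i ∈ S.toFinset, c i * M i j = ∑ i : ↥S, c i * M i j :=
          Finset.sum_subtype _ (fun x => Set.mem_toFinset) _
        have h3 := congrFun hsum ⟨j, hj⟩
        rw [Finset.sum_apply] at h3
        simp only [Pi.smul_apply, smul_eq_mul, Pi.zero_apply] at h3
        rw [← h1, h2]
        rw [← h3]
        refine Finset.sum_congr rfl fun i _ => ?_
        simp [hc, i.prop, hv]
      · refine Finset.sum_eq_zero fun i _ => ?_
        by_cases hi : i ∈ S
        · rw [hST i hi j hj, mul_zero]
        · simp [hc, hi]
    have hc0 : c = 0 := by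
      have : Matrix.vecMul (Matrix.vecMul c M) (↑u⁻¹ : Matrix (Fin n) (Fin n) A) = 0 := by
        rw [hvm, Matrix.zero_vecMul]
      rw [Matrix.vecMul_vecMul, hM, Units.mul_inv, Matrix.vecMul_one] at this
      exact this
    intro i
    have := congrFun hc0 i
    simpa [hc, i.prop] using this
  have hcard := LinearIndependent.fintype_card_le_finrank hli
  rw [Module.finrank_pi] at hcard
  rw [Set.ncard_eq_toFinset_card', Set.ncard_eq_toFinset_card']
  simpa [Set.toFinset_card] using hcard

end AuxCard
section AuxFwd

variable {K : Type} [Field K] {m n : ℕ}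

lemma ncard_le_of_crossed (hm : 0 < m) {γv : Fin n → ℤ}
    (hcp : IsCrossedProductZ (matrixComponentZ (laurentComponent K m) n γv))
    (r r' : ZMod m) :
    {i : Fin n | (γv i : ZMod m) = r}.ncard ≤ {i : Fin n | (γv i : ZMod m) = r'}.ncard := by
  haveI : NeZero m := ⟨hm.ne'⟩
  obtain ⟨u, hu⟩ := hcp (((r - r').val : ℕ) : ℤ)
  refine card_le_of_unit u _ _ ?_
  intro i hi j hj
  by_contra hne
  have hdvd : (m:ℤ) ∣ (-(γv i) + (((r - r').val : ℕ) : ℤ) + γv j) := by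
    by_contra hnd
    exact hne (laurent_eq_zero (hu i j) hnd)
  have h0 : ((-(γv i) + (((r - r').val : ℕ) : ℤ) + γv j : ℤ) : ZMod m) = 0 :=
    (ZMod.intCast_zmod_eq_zero_iff_dvd _ m).mpr hdvd
  have hval : (((r - r').val : ℕ) : ZMod m) = r - r' := by
    rw [ZMod.natCast_val, ZMod.cast_id]
  rw [Set.mem_setOf_eq] at hi
  apply hj
  rw [Set.mem_setOf_eq]
  push_cast at h0
  rw [hval, hi] at h0
  linear_combination h0
end AuxFwd
section AuxConstr

variable {K : Type} [Field K] {m n : ℕ}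

lemma skew_of_counts (hm : 0 < m) {γv : Fin n → ℤ}
    (h : ∀ r r' : ZMod m,
      {i : Fin n | (γv i : ZMod m) = r}.ncard = {i : Fin n | (γv i : ZMod m) = r'}.ncard) :
    IsSkewGroupRingZ (matrixComponentZ (laurentComponent K m) n γv) := by
  classical
  haveI : NeZero m := ⟨hm.ne'⟩
  set f : Fin n → ZMod m := fun i => (γv i : ZMod m) with hf
  -- fibers have equal cardinality
  have hfc : ∀ r : ZMod m, Fintype.card {i // f i = r} = Fintype.card {i // f i = r - 1} := by
    intro r
    have h1 : ∀ r : ZMod m, Fintype.card {i // f i = r} = {i : Fin n | (γv i : ZMod m) = r}.ncard := by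
      intro r
      rw [← Nat.card_coe_set_eq, Nat.card_eq_fintype_card]
      rfl
    rw [h1, h1, h r (r - 1)]
  set F : ∀ r : ZMod m, {i // f i = r} ≃ {i // f i = r - 1} :=
    fun r => Fintype.equivOfCardEq (hfc r) with hF
  set π : Fin n ≃ Fin n :=
    ((Equiv.sigmaFiberEquiv f).symm.trans
      (Equiv.sigmaCongr (β₂ := fun r => {i // f i = r}) (Equiv.subRight (1 : ZMod m)) F)).trans
      (Equiv.sigmaFiberEquiv f) with hπdef
  have hπ : ∀ i, f (π i) = f i - 1 := by
    intro i
    have h1 : π i = ((F (f i)) ⟨i, rfl⟩).val := rfl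
    rw [h1]
    exact ((F (f i)) ⟨i, rfl⟩).prop
  -- the exponents
  have hdvd : ∀ i, (m:ℤ) ∣ (-(γv i) + 1 + γv (π i)) := by
    intro i
    rw [← ZMod.intCast_zmod_eq_zero_iff_dvd]
    push_cast
    have h2 := hπ i
    rw [hf] at h2
    simp only at h2
    rw [h2]
    ring
  set t : Fin n → ℤ := fun i => (-(γv i) + 1 + γv (π i)) / m with htdef
  have ht : ∀ i, (m:ℤ) * t i = -(γv i) + 1 + γv (π i) := fun i =>
    Int.mul_ediv_cancel' (hdvd i)
  -- the unit and its inverse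
  set U : Matrix (Fin n) (Fin n) (AddMonoidAlgebra K ℤ) :=
    fun i j => if j = π i then AddMonoidAlgebra.single (t i) (1:K) else 0 with hUdef
  set V : Matrix (Fin n) (Fin n) (AddMonoidAlgebra K ℤ) :=
    fun i j => if i = π j then AddMonoidAlgebra.single (-(t j)) (1:K) else 0 with hVdef
  have hUV : U * V = 1 := by
    ext i j
    rw [Matrix.mul_apply]
    rw [Finset.sum_eq_single (π i)
      (fun b _ hb => by
        have : U i b = 0 := by simp only [hUdef]; exact if_neg hb
        rw [this, zero_mul])
      (fun hni => absurd (Finset.mem_univ _) hni)]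
    have pu : U i (π i) = AddMonoidAlgebra.single (t i) (1:K) := by
      simp only [hUdef]; exact if_pos trivial
    by_cases hij : i = j
    · subst hij
      have pv : V (π i) i = AddMonoidAlgebra.single (-(t i)) (1:K) := by
        simp only [hVdef]; exact if_pos trivial
      rw [pu, pv, AddMonoidAlgebra.single_mul_single, add_neg_cancel, one_mul,
        Matrix.one_apply_eq, ← AddMonoidAlgebra.one_def]
    · have pv : V (π i) j = 0 := by
        simp only [hVdef]
        exact if_neg fun hc => hij (π.injective hc)
      rw [pu, pv, mul_zero, Matrix.one_apply_ne hij]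
  have hVU : V * U = 1 := by
    ext i j
    rw [Matrix.mul_apply]
    rw [Finset.sum_eq_single (π.symm i)
      (fun b _ hb => by
        have hne : i ≠ π b := fun hc => hb (by rw [hc, Equiv.symm_apply_apply])
        have : V i b = 0 := by simp only [hVdef]; exact if_neg hne
        rw [this, zero_mul])
      (fun hni => absurd (Finset.mem_univ _) hni)]
    have pv : V i (π.symm i) = AddMonoidAlgebra.single (-(t (π.symm i))) (1:K) := by
      simp only [hVdef]; exact if_pos (π.apply_symm_apply i).symm
    by_cases hij : i = j
    · subst hij
      have pu : U (π.symm i) i = AddMonoidAlgebra.single (t (π.symm i)) (1:K) := by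
        simp only [hUdef]; exact if_pos (π.apply_symm_apply i).symm
      rw [pv, pu, AddMonoidAlgebra.single_mul_single, neg_add_cancel, one_mul,
        Matrix.one_apply_eq, ← AddMonoidAlgebra.one_def]
    · have pu : U (π.symm i) j = 0 := by
        simp only [hUdef]
        exact if_neg fun hc => hij ((π.apply_symm_apply i) ▸ hc.symm)
      rw [pv, pu, mul_zero, Matrix.one_apply_ne hij]
  set Uu : (Matrix (Fin n) (Fin n) (AddMonoidAlgebra K ℤ))ˣ := ⟨U, V, hUV, hVU⟩ with hUu
  have hU : U ∈ matrixComponentZ (laurentComponent K m) n γv 1 := by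
    intro i j
    by_cases hj : j = π i
    · rw [hUdef]
      simp only [if_pos hj]
      refine single_mem_laurent ?_ _
      rw [ht i, hj]
    · rw [hUdef]; simp only [if_neg hj]; exact zero_mem _
  have hV : V ∈ matrixComponentZ (laurentComponent K m) n γv (-1) := by
    intro i j
    by_cases hij : i = π j
    · rw [hVdef]
      simp only [if_pos hij]
      refine single_mem_laurent ?_ _
      have := ht j
      rw [hij]
      push_cast
      linarith
    · rw [hVdef]; simp only [if_neg hij]; exact zero_mem _
  have hzpow : ∀ d : ℤ, ((Uu ^ d : _ˣ) : Matrix (Fin n) (Fin n) (AddMonoidAlgebra K ℤ)) ∈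
      matrixComponentZ (laurentComponent K m) n γv d := by
    intro d
    induction d using Int.induction_on with
    | zero => simpa using matrixComp_one (K := K) (m := m) γv
    | succ k ih =>
        rw [zpow_add_one, Units.val_mul]
        exact matrixComp_mul ih hU
    | pred k ih =>
        have hr : (-(k:ℤ) - 1) = (-(k:ℤ)) + (-1) := by ring
        rw [hr, zpow_add, Units.val_mul]
        have hinv : ((Uu ^ (-1 : ℤ) : _ˣ) : Matrix (Fin n) (Fin n) (AddMonoidAlgebra K ℤ)) = V := by
          rw [zpow_neg, zpow_one]
          rfl
        rw [hinv] at *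
        exact matrixComp_mul ih (by rw [hinv]; exact hV)
    
  exact ⟨fun d => Uu ^ d, fun a b => zpow_add Uu a b, hzpow⟩

end AuxConstr
/-- `Mₙ(K[x^m, x^{-m}])(γ₁, …, γₙ)` is a crossed product iff the
counts `k_j = #{i | γᵢ ≡ j (mod m)}`, `j = 0, …, m-1`, are all positive and equal to
each other; and in that case it is a skew group ring. -/
theorem laurentMatrix_crossedProduct_iff (K : Type) [Field K] (m n : ℕ) (hm : 0 < m)
    (hn : 0 < n) (γv : Fin n → ℤ) :
    (IsCrossedProductZ (matrixComponentZ (laurentComponent K m) n γv) ↔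
      ((∀ j : ℕ, j < m → 0 < {i : Fin n | γv i % (m : ℤ) = (j : ℤ)}.ncard) ∧
        ∀ j j' : ℕ, j < m → j' < m →
          {i : Fin n | γv i % (m : ℤ) = (j : ℤ)}.ncard =
          {i : Fin n | γv i % (m : ℤ) = (j' : ℤ)}.ncard)) ∧
    (IsCrossedProductZ (matrixComponentZ (laurentComponent K m) n γv) →
      IsSkewGroupRingZ (matrixComponentZ (laurentComponent K m) n γv)) := by
  haveI : NeZero m := ⟨hm.ne'⟩
  have hset : ∀ j : ℕ, j < m → {i : Fin n | γv i % (m : ℤ) = (j : ℤ)} =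
      {i : Fin n | (γv i : ZMod m) = ((j : ℤ) : ZMod m)} := by
    intro j hj
    ext i
    simp only [Set.mem_setOf_eq]
    rw [ZMod.intCast_eq_intCast_iff',
      Int.emod_eq_of_lt (Int.natCast_nonneg j) (by exact_mod_cast hj)]
  have hset2 : ∀ r : ZMod m, {i : Fin n | (γv i : ZMod m) = r} =
      {i : Fin n | γv i % (m : ℤ) = ((r.val : ℕ) : ℤ)} := by
    intro r
    rw [hset r.val (ZMod.val_lt r)]
    have : (((r.val : ℕ) : ℤ) : ZMod m) = r := by
      push_cast [ZMod.natCast_val, ZMod.cast_id]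
      rfl
    rw [this]
  have hfwd : IsCrossedProductZ (matrixComponentZ (laurentComponent K m) n γv) →
      ((∀ j : ℕ, j < m → 0 < {i : Fin n | γv i % (m : ℤ) = (j : ℤ)}.ncard) ∧
        ∀ j j' : ℕ, j < m → j' < m →
          {i : Fin n | γv i % (m : ℤ) = (j : ℤ)}.ncard =
          {i : Fin n | γv i % (m : ℤ) = (j' : ℤ)}.ncard) := by
    intro hcp
    have heqz : ∀ r r' : ZMod m, {i : Fin n | (γv i : ZMod m) = r}.ncard =
        {i : Fin n | (γv i : ZMod m) = r'}.ncard := fun r r' =>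
      le_antisymm (ncard_le_of_crossed hm hcp r r') (ncard_le_of_crossed hm hcp r' r)
    constructor
    · intro j hj
      rw [hset j hj, heqz _ ((γv ⟨0, hn⟩ : ZMod m))]
      rw [Set.ncard_pos (Set.toFinite _)]
      exact ⟨⟨0, hn⟩, rfl⟩
    · intro j j' hj hj'
      rw [hset j hj, hset j' hj']
      exact heqz _ _
  have hcnt : ((∀ j : ℕ, j < m → 0 < {i : Fin n | γv i % (m : ℤ) = (j : ℤ)}.ncard) ∧
        ∀ j j' : ℕ, j < m → j' < m →
          {i : Fin n | γv i % (m : ℤ) = (j : ℤ)}.ncard =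
          {i : Fin n | γv i % (m : ℤ) = (j' : ℤ)}.ncard) →
      ∀ r r' : ZMod m, {i : Fin n | (γv i : ZMod m) = r}.ncard =
        {i : Fin n | (γv i : ZMod m) = r'}.ncard := by
    rintro ⟨_, heq⟩ r r'
    rw [hset2 r, hset2 r']
    exact heq r.val r'.val (ZMod.val_lt r) (ZMod.val_lt r')
  refine ⟨⟨hfwd, fun hc => ?_⟩, fun hcp => ?_⟩
  · obtain ⟨σ, hσmul, hσmem⟩ := skew_of_counts (K := K) (γv := γv) hm (hcnt hc)
    exact fun d => ⟨σ d, hσmem d⟩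
  · exact skew_of_counts (K := K) (γv := γv) hm (hcnt (hfwd hcp))
end
end
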